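/- Markov property of the trace for χ = E_n: for all 2ⁿ × 2ⁿ complex matrices A and B, Trace((A ⊗ I₂)·(I₂^{⊗(n−1)} ⊗ E)·(B ⊗ I₂)) = Trace(A·B), where the trace on the left is of 2^{n+1} × 2^{n+1} matrices. Equivalently, with normalized traces Tr_m = (1/2^m)·Trace, one has Tr_{n+1}((A ⊗ I₂)(I₂^{⊗(n−1)} ⊗ E)(B ⊗ I₂)) = Tr_{n+1}(I₂^{⊗(n−1)} ⊗ E)·Tr_{n+1}((A·B) ⊗ I₂). -/

import Mathlib

open Matrix

noncomputable section

/-- Kronecker product of square matrices, reindexed to `Fin (a * b)`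
(lexicographically: the first factor is the most significant). -/
def kron {a b : ℕ} (A : Matrix (Fin a) (Fin a) ℂ) (B : Matrix (Fin b) (Fin b) ℂ) :
    Matrix (Fin (a * b)) (Fin (a * b)) ℂ :=
  Matrix.reindex finProdFinEquiv finProdFinEquiv (Matrix.kroneckerMap (· * ·) A B)

/-- The matrix `E` with rows `(0,0,0,0), (0,1,1,0), (0,1,1,0), (0,0,0,0)`. -/
def EmatBMW : Matrix (Fin 4) (Fin 4) ℂ :=
  !![0, 0, 0, 0; 0, 1, 1, 0; 0, 1, 1, 0; 0, 0, 0, 0]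

/-- `I₂^{⊗(n−1)} ⊗ M` as a `2ⁿ·2 × 2ⁿ·2` matrix.  The size condition in the `dite` holds
whenever `n ≥ 1`. -/
def bigTensor (n : ℕ) (M : Matrix (Fin 4) (Fin 4) ℂ) :
    Matrix (Fin (2 ^ n * 2)) (Fin (2 ^ n * 2)) ℂ :=
  if h : 2 ^ (n - 1) * 4 = 2 ^ n * 2 then
    Matrix.reindex (finCongr h) (finCongr h)
      (kron (1 : Matrix (Fin (2 ^ (n - 1))) (Fin (2 ^ (n - 1))) ℂ) M)
  else 1

lemma kron_apply {a b : ℕ} (A : Matrix (Fin a) (Fin a) ℂ) (B : Matrix (Fin b) (Fin b) ℂ)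
    (i k : Fin a) (j l : Fin b) :
    kron A B (finProdFinEquiv (i, j)) (finProdFinEquiv (k, l)) = A i k * B j l := by
  simp [kron]

lemma kron_mul {a b : ℕ} (A C : Matrix (Fin a) (Fin a) ℂ) (B D : Matrix (Fin b) (Fin b) ℂ) :
    kron A B * kron C D = kron (A * C) (B * D) := by
  unfold kron
  rw [Matrix.reindex_apply, Matrix.reindex_apply, Matrix.submatrix_mul_equiv,
    ← Matrix.mul_kronecker_mul]
  rfl

lemma trace_reindex' {m k : Type*} [Fintype m] [Fintype k] [DecidableEq m] [DecidableEq k]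
    (e : m ≃ k) (M : Matrix m m ℂ) :
    Matrix.trace (Matrix.reindex e e M) = Matrix.trace M := by
  simp only [Matrix.trace, Matrix.diag, Matrix.reindex_apply, Matrix.submatrix_apply]
  exact Fintype.sum_equiv e.symm _ _ (fun i => rfl)

lemma trace_kron {a b : ℕ} (A : Matrix (Fin a) (Fin a) ℂ) (B : Matrix (Fin b) (Fin b) ℂ) :
    Matrix.trace (kron A B) = Matrix.trace A * Matrix.trace B := by
  rw [kron, trace_reindex']
  exact Matrix.trace_kronecker A B

lemma key (n : ℕ) (hn : 1 ≤ n) (C : Matrix (Fin (2^n)) (Fin (2^n)) ℂ) :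
    Matrix.trace (bigTensor n EmatBMW * kron C (1 : Matrix (Fin 2) (Fin 2) ℂ)) =
      Matrix.trace C := by
  have h2 : 2 ^ (n-1) * 2 = 2 ^ n := by
    conv_rhs => rw [show n = (n-1)+1 by omega]
    rw [pow_succ]
  have h4 : 2 ^ (n-1) * 4 = 2 ^ n * 2 := by omega
  rw [bigTensor, dif_pos h4]
  set g : Fin (2^(n-1)) × Fin 2 ≃ Fin (2^n) := finProdFinEquiv.trans (finCongr h2) with hg
  set e : (Fin (2^(n-1)) × Fin 2 × Fin 2) ≃ Fin (2^n * 2) :=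
    ((Equiv.refl (Fin (2^(n-1)))).prodCongr finProdFinEquiv).trans
      (finProdFinEquiv.trans (finCongr h4)) with he
  have hassoc : ∀ (y : Fin (2^(n-1))) (a s : Fin 2),
      e (y, a, s) = finProdFinEquiv (g (y, a), s) := by
    intro y a s
    apply Fin.ext
    simp [he, hg, finProdFinEquiv]
    ring
  have trace_formula : ∀ (M P : Matrix (Fin (2^n*2)) (Fin (2^n*2)) ℂ),
      Matrix.trace (M * P) =
        ∑ x : Fin (2^(n-1)) × Fin 2 × Fin 2, ∑ x' : Fin (2^(n-1)) × Fin 2 × Fin 2,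
          M (e x) (e x') * P (e x') (e x) := by
    intro M P
    rw [Matrix.trace]
    simp only [Matrix.diag, Matrix.mul_apply]
    rw [← Equiv.sum_comp e (fun i => ∑ j, M i j * P j i)]
    congr 1; funext x
    rw [← Equiv.sum_comp e (fun j => M (e x) j * P j (e x))]
  rw [trace_formula]
  have hM : ∀ (y y' : Fin (2^(n-1))) (a s a' s' : Fin 2),
      (Matrix.reindex (finCongr h4) (finCongr h4)
        (kron (1 : Matrix (Fin (2 ^ (n - 1))) (Fin (2 ^ (n - 1))) ℂ) EmatBMW))
        (e (y,a,s)) (e (y',a',s')) =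
      (if y = y' then 1 else 0) *
        EmatBMW (finProdFinEquiv (a,s)) (finProdFinEquiv (a',s')) := by
    intro y y' a s a' s'
    simp [he, kron, Matrix.one_apply]
  have hP : ∀ (y y' : Fin (2^(n-1))) (a s a' s' : Fin 2),
      kron C (1 : Matrix (Fin 2) (Fin 2) ℂ) (e (y',a',s')) (e (y,a,s)) =
        C (g (y',a')) (g (y,a)) * (if s' = s then 1 else 0) := by
    intro y y' a s a' s'
    rw [hassoc, hassoc, kron_apply, Matrix.one_apply]
  simp only [Fintype.sum_prod_type]
  simp only [hM, hP]
  simp only [Fin.sum_univ_two]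
  have fp00 : (finProdFinEquiv ((0:Fin 2),(0:Fin 2)) : Fin 4) = 0 := by decide
  have fp01 : (finProdFinEquiv ((0:Fin 2),(1:Fin 2)) : Fin 4) = 1 := by decide
  have fp10 : (finProdFinEquiv ((1:Fin 2),(0:Fin 2)) : Fin 4) = 2 := by decide
  have fp11 : (finProdFinEquiv ((1:Fin 2),(1:Fin 2)) : Fin 4) = 3 := by decide
  simp only [fp00, fp01, fp10, fp11]
  norm_num [EmatBMW, Matrix.one_apply, Finset.sum_ite_eq, Finset.sum_ite_eq',
    mul_ite, ite_mul, mul_zero, zero_mul, mul_one, one_mul, Finset.sum_add_distrib, Matrix.vecHead, Matrix.vecTail]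
  rw [Matrix.trace, ← Equiv.sum_comp g (fun x => Matrix.diag C x)]
  simp only [Matrix.diag, Fintype.sum_prod_type, Fin.sum_univ_two, Finset.sum_add_distrib]
  simp [Matrix.cons_val]

/-- Markov property for `χ = E_n`: for all `2ⁿ × 2ⁿ` matrices `A, B`,
`Trace((A ⊗ I₂)(I₂^{⊗(n−1)} ⊗ E)(B ⊗ I₂)) = Trace(A·B)`; equivalently, with the normalized
traces `Tr_m = 2^{−m}·Trace`,
`Tr_{n+1}((A ⊗ I₂)(I₂^{⊗(n−1)} ⊗ E)(B ⊗ I₂)) = Tr_{n+1}(I₂^{⊗(n−1)} ⊗ E)·Tr_{n+1}((A·B) ⊗ I₂)`. -/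
theorem stmt_19 (n : ℕ) (hn : 2 ≤ n) :
    ∀ A B : Matrix (Fin (2 ^ n)) (Fin (2 ^ n)) ℂ,
      Matrix.trace (kron A (1 : Matrix (Fin 2) (Fin 2) ℂ) * bigTensor n EmatBMW *
          kron B (1 : Matrix (Fin 2) (Fin 2) ℂ)) =
        Matrix.trace (A * B) ∧
      ((2 : ℂ) ^ (n + 1))⁻¹ *
          Matrix.trace (kron A (1 : Matrix (Fin 2) (Fin 2) ℂ) * bigTensor n EmatBMW *
            kron B (1 : Matrix (Fin 2) (Fin 2) ℂ)) =
        (((2 : ℂ) ^ (n + 1))⁻¹ * Matrix.trace (bigTensor n EmatBMW)) *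
          (((2 : ℂ) ^ (n + 1))⁻¹ *
            Matrix.trace (kron (A * B) (1 : Matrix (Fin 2) (Fin 2) ℂ))) := by
  intro A B
  have hn1 : 1 ≤ n := by omega
  have h4 : 2 ^ (n-1) * 4 = 2 ^ n * 2 := by
    have : 2 ^ (n-1) * 2 = 2 ^ n := by
      conv_rhs => rw [show n = (n-1)+1 by omega]
      rw [pow_succ]
    omega
  have main : Matrix.trace (kron A (1 : Matrix (Fin 2) (Fin 2) ℂ) * bigTensor n EmatBMW *
      kron B (1 : Matrix (Fin 2) (Fin 2) ℂ)) = Matrix.trace (A * B) := by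
    rw [Matrix.trace_mul_cycle, kron_mul, Matrix.trace_mul_comm, one_mul, key n hn1,
      Matrix.trace_mul_comm]
  refine ⟨main, ?_⟩
  rw [main]
  have htrBig : Matrix.trace (bigTensor n EmatBMW) = (2 : ℂ) ^ n := by
    rw [bigTensor, dif_pos h4, trace_reindex', trace_kron, Matrix.trace_one]
    have hE : Matrix.trace EmatBMW = 2 := by
      simp [Matrix.trace, Matrix.diag, Fin.sum_univ_four, EmatBMW, Matrix.vecHead, Matrix.vecTail]
      norm_num
    rw [hE]
    simp only [Fintype.card_fin]
    push_cast
    rw [← pow_succ]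
    congr 1
    omega
  have htrK : Matrix.trace (kron (A * B) (1 : Matrix (Fin 2) (Fin 2) ℂ)) =
      Matrix.trace (A * B) * 2 := by
    rw [trace_kron, Matrix.trace_one]
    norm_num
  rw [htrBig, htrK]
  have h2 : (2 : ℂ) ^ (n + 1) ≠ 0 := pow_ne_zero _ two_ne_zero
  field_simp
  ring
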